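/- arXiv:1601.02645 — 2 statements merged into one kernel-verified Lean document; each statement's English description precedes it below -/
import Mathlib

section
/- Let L > 0. Let u : ℝ → ℝ be twice continuously differentiable, g, f : ℝ → ℝ continuous, and suppose that at the fixed time t*: g(x) − c(x) u''(x) = f(x) for all x ∈ [0, L], where the velocity coefficient is c(x) = Σ_{j=1}^{J} β_j υ_j(x) with υ_1, …, υ_J : ℝ → ℝ twice continuously differentiable and β_1, …, β_J ∈ ℝ. Let φ : ℝ → ℝ be twice continuously differentiable with φ(0) = φ(L) = φ'(0) = φ'(L) = 0. Then Σ_{j=1}^{J} β_j ∫₀ᴸ u(x) [υ_j''(x) φ(x) + 2 υ_j'(x) φ'(x) + υ_j(x) φ''(x)] dx = ∫₀ᴸ [g(x) − f(x)] φ(x) dx. (The linear algebraic relation 𝒜Γ = K for the velocity estimation problem IP2 in the wave equation.) -/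
open intervalIntegral

lemma cd2_facts {h : ℝ → ℝ} (hh : ContDiff ℝ 2 h) :
    Differentiable ℝ h ∧ Differentiable ℝ (deriv h) ∧ Continuous (deriv (deriv h)) := by
  have h2 : ContDiff ℝ ((1:ℕ∞)+1) h := hh
  rw [contDiff_succ_iff_deriv] at h2
  have h1 : ContDiff ℝ 1 (deriv h) := by exact_mod_cast h2.2.2
  rw [contDiff_one_iff_deriv] at h1
  exact ⟨h2.1, h1.1, h1.2⟩

lemma ibp2 (L : ℝ) (u ψ ψ' ψ'' : ℝ → ℝ)
    (hu : ContDiff ℝ 2 u)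
    (h1 : ∀ x, HasDerivAt ψ (ψ' x) x)
    (h2 : ∀ x, HasDerivAt ψ' (ψ'' x) x)
    (hc2 : Continuous ψ'')
    (hψ0 : ψ 0 = 0) (hψL : ψ L = 0) (hψ'0 : ψ' 0 = 0) (hψ'L : ψ' L = 0) :
    ∫ x in (0:ℝ)..L, u x * ψ'' x = ∫ x in (0:ℝ)..L, deriv (deriv u) x * ψ x := by
  obtain ⟨hud, hud2, hud2c⟩ := cd2_facts hu
  have hdψ : Differentiable ℝ ψ := fun x => (h1 x).differentiableAt
  have hdψ' : Differentiable ℝ ψ' := fun x => (h2 x).differentiableAt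
  have hcψ : Continuous ψ := hdψ.continuous
  have hcψ' : Continuous ψ' := hdψ'.continuous
  have hcu' : Continuous (deriv u) := hud2.continuous
  have hdu : ∀ x ∈ Set.uIcc (0:ℝ) L, HasDerivAt u (deriv u x) x :=
    fun x _ => (hud x).hasDerivAt
  have hdu' : ∀ x ∈ Set.uIcc (0:ℝ) L, HasDerivAt (deriv u) (deriv (deriv u) x) x :=
    fun x _ => (hud2 x).hasDerivAt
  have step1 : ∫ x in (0:ℝ)..L, u x * ψ'' x = - ∫ x in (0:ℝ)..L, deriv u x * ψ' x := by
    have := integral_mul_deriv_eq_deriv_mul hdu (fun x _ => h2 x)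
      (hcu'.intervalIntegrable _ _) (hc2.intervalIntegrable _ _)
    rw [this, hψ'0, hψ'L]; ring
  have step2 : ∫ x in (0:ℝ)..L, deriv u x * ψ' x
      = - ∫ x in (0:ℝ)..L, deriv (deriv u) x * ψ x := by
    have := integral_mul_deriv_eq_deriv_mul hdu' (fun x _ => h1 x)
      (hud2c.intervalIntegrable _ _) (hcψ'.intervalIntegrable _ _)
    rw [this, hψ0, hψL]; ring
  rw [step1, step2, neg_neg]

/-- The linear algebraic relation `𝒜Γ = K` for the velocity estimation
problem IP2 in the wave equation: if `g - c u'' = f` on `[0, L]` with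
`c = Σⱼ βⱼ υⱼ`, and `φ` is a second-order modulating function, then
`Σⱼ βⱼ ∫₀ᴸ u (υⱼ'' φ + 2 υⱼ' φ' + υⱼ φ'') = ∫₀ᴸ (g - f) φ`. -/
theorem wave_IP2_linear_relation (L : ℝ) (hL : 0 < L) (J : ℕ)
    (u g f : ℝ → ℝ) (υ : Fin J → ℝ → ℝ) (β : Fin J → ℝ)
    (hu : ContDiff ℝ 2 u) (hg : Continuous g) (hf : Continuous f)
    (hυ : ∀ j, ContDiff ℝ 2 (υ j))
    (hPDE : ∀ x ∈ Set.Icc (0:ℝ) L,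
      g x - (∑ j, β j * υ j x) * deriv (deriv u) x = f x)
    (φ : ℝ → ℝ) (hφ : ContDiff ℝ 2 φ)
    (hφ0 : φ 0 = 0) (hφL : φ L = 0) (hφ'0 : deriv φ 0 = 0) (hφ'L : deriv φ L = 0) :
    ∑ j, β j * ∫ x in (0:ℝ)..L,
        u x * (deriv (deriv (υ j)) x * φ x + 2 * deriv (υ j) x * deriv φ x
          + υ j x * deriv (deriv φ) x)
      = ∫ x in (0:ℝ)..L, (g x - f x) * φ x := by
  obtain ⟨hφd, hφd2, hφd2c⟩ := cd2_facts hφ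
  obtain ⟨hud, hud2, hud2c⟩ := cd2_facts hu
  have key : ∀ j, (∫ x in (0:ℝ)..L,
      u x * (deriv (deriv (υ j)) x * φ x + 2 * deriv (υ j) x * deriv φ x
        + υ j x * deriv (deriv φ) x))
      = ∫ x in (0:ℝ)..L, deriv (deriv u) x * (υ j x * φ x) := by
    intro j
    obtain ⟨hvd, hvd2, hvd2c⟩ := cd2_facts (hυ j)
    apply ibp2 L u (fun x => υ j x * φ x)
      (fun x => deriv (υ j) x * φ x + υ j x * deriv φ x) _ hu
    · exact fun x => ((hvd x).hasDerivAt.mul (hφd x).hasDerivAt)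
    · intro x
      have ha := (hvd2 x).hasDerivAt.mul (hφd x).hasDerivAt
      have hb := (hvd x).hasDerivAt.mul (hφd2 x).hasDerivAt
      have h := ha.add hb
      have h' : HasDerivAt (fun x => deriv (υ j) x * φ x + υ j x * deriv φ x)
          (deriv (deriv (υ j)) x * φ x + 2 * deriv (υ j) x * deriv φ x
            + υ j x * deriv (deriv φ) x) x := h.congr_deriv (by ring)
      exact h'
    · exact ((hvd2c.mul hφ.continuous).add
        ((continuous_const.mul hvd2.continuous).mul hφd2.continuous)).add
        ((hυ j).continuous.mul hφd2c)
    · simp [hφ0]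
    · simp [hφL]
    · simp [hφ0, hφ'0]
    · simp [hφL, hφ'L]
  simp_rw [key]
  have hint : ∀ j : Fin J, IntervalIntegrable
      (fun x => β j * (deriv (deriv u) x * (υ j x * φ x))) MeasureTheory.volume 0 L := by
    intro j
    exact (continuous_const.mul (hud2c.mul ((hυ j).continuous.mul hφ.continuous))).intervalIntegrable _ _
  calc ∑ j, β j * ∫ x in (0:ℝ)..L, deriv (deriv u) x * (υ j x * φ x)
      = ∑ j, ∫ x in (0:ℝ)..L, β j * (deriv (deriv u) x * (υ j x * φ x)) := by
        simp_rw [integral_const_mul]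
    _ = ∫ x in (0:ℝ)..L, ∑ j, β j * (deriv (deriv u) x * (υ j x * φ x)) := by
        exact (integral_finset_sum (fun j _ => hint j)).symm
    _ = ∫ x in (0:ℝ)..L, (g x - f x) * φ x := by
        apply integral_congr
        intro x hx
        dsimp only
        rw [Set.uIcc_of_le hL.le] at hx
        have := hPDE x hx
        have hgf : g x - f x = (∑ j, β j * υ j x) * deriv (deriv u) x := by linarith
        rw [hgf, Finset.sum_mul, Finset.sum_mul]
        apply Finset.sum_congr rfl
        intro j _
        ring
end

section
/- Let L > 0. Let u : ℝ → ℝ be twice continuously differentiable and g : ℝ → ℝ continuous, and suppose the wave equation holds at the fixed time t*: g(x) = Σ_{i=1}^{I} γ_i ξ_i(x) + c(x) u''(x) for all x ∈ [0, L], where the source is f(x) = Σ_{i=1}^{I} γ_i ξ_i(x) with continuous basis functions ξ_i and the velocity coefficient is c(x) = Σ_{j=1}^{J} β_j υ_j(x) with twice continuously differentiable basis functions υ_j. Let φ : ℝ → ℝ be twice continuously differentiable with φ(0) = φ(L) = φ'(0) = φ'(L) = 0. Then Σ_{i=1}^{I} γ_i ∫₀ᴸ φ(x) ξ_i(x) dx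 + Σ_{j=1}^{J} β_j ∫₀ᴸ u(x) [υ_j''(x) φ(x) + 2 υ_j'(x) φ'(x) + υ_j(x) φ''(x)] dx = ∫₀ᴸ g(x) φ(x) dx. (The linear algebraic relation ℬϜ = Q for the joint source–velocity estimation problem IP3 in the wave equation.) -/
lemma myC1deriv (u : ℝ → ℝ) (hu : ContDiff ℝ 2 u) : ContDiff ℝ 1 (deriv u) :=
  (contDiff_succ_iff_deriv.mp (show ContDiff ℝ (1+1) u from by exact_mod_cast hu)).2.2

lemma myderiv2_mul (v φ : ℝ → ℝ) (hv : ContDiff ℝ 2 v) (hφ : ContDiff ℝ 2 φ) (x : ℝ) :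
    deriv (deriv (fun y => v y * φ y)) x
      = deriv (deriv v) x * φ x + 2 * deriv v x * deriv φ x + v x * deriv (deriv φ) x := by
  have hvd : Differentiable ℝ v := hv.differentiable two_ne_zero
  have hφd : Differentiable ℝ φ := hφ.differentiable two_ne_zero
  have hvd' : Differentiable ℝ (deriv v) := (myC1deriv v hv).differentiable one_ne_zero
  have hφd' : Differentiable ℝ (deriv φ) := (myC1deriv φ hφ).differentiable one_ne_zero
  have h1 : deriv (fun y => v y * φ y) = fun y => deriv v y * φ y + v y * deriv φ y :=
    funext fun y => deriv_fun_mul (hvd y) (hφd y)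
  rw [h1, deriv_fun_add ((hvd' x).fun_mul (hφd x)) ((hvd x).fun_mul (hφd' x)),
    deriv_fun_mul (hvd' x) (hφd x), deriv_fun_mul (hvd x) (hφd' x)]
  ring

lemma myparts (L : ℝ) (u w : ℝ → ℝ) (hu : ContDiff ℝ 2 u) (hw : ContDiff ℝ 2 w)
    (h0 : w 0 = 0) (hL : w L = 0) (h0' : deriv w 0 = 0) (hL' : deriv w L = 0) :
    ∫ x in (0:ℝ)..L, w x * deriv (deriv u) x = ∫ x in (0:ℝ)..L, deriv (deriv w) x * u x := by
  have hud : Differentiable ℝ u := hu.differentiable two_ne_zero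
  have hwd : Differentiable ℝ w := hw.differentiable two_ne_zero
  have hud' : Differentiable ℝ (deriv u) := (myC1deriv u hu).differentiable one_ne_zero
  have hwd' : Differentiable ℝ (deriv w) := (myC1deriv w hw).differentiable one_ne_zero
  have cdu2 : Continuous (deriv (deriv u)) := (myC1deriv u hu).continuous_deriv le_rfl
  have cdw2 : Continuous (deriv (deriv w)) := (myC1deriv w hw).continuous_deriv le_rfl
  have step1 : ∫ x in (0:ℝ)..L, w x * deriv (deriv u) x
      = - ∫ x in (0:ℝ)..L, deriv w x * deriv u x := by
    rw [intervalIntegral.integral_mul_deriv_eq_deriv_mul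
      (u := w) (u' := deriv w) (v := deriv u) (v' := deriv (deriv u))
      (fun x _ => (hwd x).hasDerivAt) (fun x _ => (hud' x).hasDerivAt)
      (hwd'.continuous.intervalIntegrable _ _) (cdu2.intervalIntegrable _ _)]
    rw [hL, h0]; ring
  have step2 : ∫ x in (0:ℝ)..L, deriv w x * deriv u x
      = - ∫ x in (0:ℝ)..L, deriv (deriv w) x * u x := by
    rw [intervalIntegral.integral_mul_deriv_eq_deriv_mul
      (u := deriv w) (u' := deriv (deriv w)) (v := u) (v' := deriv u)
      (fun x _ => (hwd' x).hasDerivAt) (fun x _ => (hud x).hasDerivAt)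
      (cdw2.intervalIntegrable _ _) (hud'.continuous.intervalIntegrable _ _)]
    rw [hL', h0']; ring
  rw [step1, step2]; ring

/-- The linear algebraic relation `ℬϜ = Q` for the joint source–velocity
estimation problem IP3 in the wave equation. -/
theorem wave_IP3_linear_relation (L : ℝ) (hL : 0 < L) (I J : ℕ)
    (u g : ℝ → ℝ) (ξ : Fin I → ℝ → ℝ) (γ : Fin I → ℝ)
    (υ : Fin J → ℝ → ℝ) (β : Fin J → ℝ)
    (hu : ContDiff ℝ 2 u) (hg : Continuous g)
    (hξ : ∀ i, Continuous (ξ i)) (hυ : ∀ j, ContDiff ℝ 2 (υ j))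
    (hPDE : ∀ x ∈ Set.Icc (0:ℝ) L,
      g x = (∑ i, γ i * ξ i x) + (∑ j, β j * υ j x) * deriv (deriv u) x)
    (φ : ℝ → ℝ) (hφ : ContDiff ℝ 2 φ)
    (hφ0 : φ 0 = 0) (hφL : φ L = 0) (hφ'0 : deriv φ 0 = 0) (hφ'L : deriv φ L = 0) :
    (∑ i, γ i * ∫ x in (0:ℝ)..L, φ x * ξ i x)
      + ∑ j, β j * ∫ x in (0:ℝ)..L,
          u x * (deriv (deriv (υ j)) x * φ x + 2 * deriv (υ j) x * deriv φ x
            + υ j x * deriv (deriv φ) x)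
      = ∫ x in (0:ℝ)..L, g x * φ x := by
  have hφd : Differentiable ℝ φ := hφ.differentiable two_ne_zero
  have hφc : Continuous φ := hφ.continuous
  have huc : Continuous u := hu.continuous
  have cdu2 : Continuous (deriv (deriv u)) := (myC1deriv u hu).continuous_deriv le_rfl
  -- the product w j = υ j * φ
  set w : Fin J → ℝ → ℝ := fun j x => υ j x * φ x with hw
  have hwC2 : ∀ j, ContDiff ℝ 2 (w j) := fun j => (hυ j).mul hφ
  have hparts : ∀ j, ∫ x in (0:ℝ)..L, w j x * deriv (deriv u) x
      = ∫ x in (0:ℝ)..L, u x * (deriv (deriv (υ j)) x * φ x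
          + 2 * deriv (υ j) x * deriv φ x + υ j x * deriv (deriv φ) x) := by
    intro j
    have hυd : Differentiable ℝ (υ j) := (hυ j).differentiable two_ne_zero
    have h0' : deriv (w j) 0 = 0 := by
      rw [show deriv (w j) 0 = deriv (υ j) 0 * φ 0 + υ j 0 * deriv φ 0 from
        deriv_fun_mul (hυd 0) (hφd 0), hφ0, hφ'0]; ring
    have hL' : deriv (w j) L = 0 := by
      rw [show deriv (w j) L = deriv (υ j) L * φ L + υ j L * deriv φ L from
        deriv_fun_mul (hυd L) (hφd L), hφL, hφ'L]; ring
    rw [myparts L u (w j) hu (hwC2 j) (by simp [hw, hφ0]) (by simp [hw, hφL]) h0' hL']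
    refine intervalIntegral.integral_congr fun x _ => ?_
    rw [show deriv (deriv (w j)) x = deriv (deriv (υ j)) x * φ x
        + 2 * deriv (υ j) x * deriv φ x + υ j x * deriv (deriv φ) x from
      myderiv2_mul (υ j) φ (hυ j) hφ x]
    ring
  have hstep : ∫ x in (0:ℝ)..L, g x * φ x
      = ∫ x in (0:ℝ)..L, ((∑ i, γ i * (φ x * ξ i x))
          + ∑ j, β j * (w j x * deriv (deriv u) x)) := by
    refine intervalIntegral.integral_congr fun x hx => ?_
    rw [hPDE x (by rwa [Set.uIcc_of_le hL.le] at hx)]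
    simp only [add_mul, Finset.sum_mul]
    congr 1
    · exact Finset.sum_congr rfl fun i _ => by ring
    · exact Finset.sum_congr rfl fun j _ => by simp only [hw]; ring
  have hint1 : ∀ i : Fin I, IntervalIntegrable (fun x => γ i * (φ x * ξ i x))
      MeasureTheory.volume 0 L :=
    fun i => (Continuous.mul continuous_const (hφc.mul (hξ i))).intervalIntegrable _ _
  have hint2 : ∀ j : Fin J, IntervalIntegrable (fun x => β j * (w j x * deriv (deriv u) x))
      MeasureTheory.volume 0 L :=
    fun j => (Continuous.mul continuous_const
      ((((hυ j).continuous.mul hφc).mul cdu2))).intervalIntegrable _ _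
  have hA : IntervalIntegrable (fun x => ∑ i, γ i * (φ x * ξ i x))
      MeasureTheory.volume 0 L :=
    (continuous_finset_sum _ fun i _ =>
      continuous_const.mul (hφc.mul (hξ i))).intervalIntegrable _ _
  have hB : IntervalIntegrable (fun x => ∑ j, β j * (w j x * deriv (deriv u) x))
      MeasureTheory.volume 0 L :=
    (continuous_finset_sum _ fun j _ => continuous_const.mul
      (((hυ j).continuous.mul hφc).mul cdu2)).intervalIntegrable _ _
  rw [hstep, intervalIntegral.integral_add hA hB,
    intervalIntegral.integral_finset_sum (fun i _ => hint1 i),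
    intervalIntegral.integral_finset_sum (fun j _ => hint2 j)]
  congr 1
  · exact Finset.sum_congr rfl fun i _ => by
      rw [intervalIntegral.integral_const_mul]
  · exact Finset.sum_congr rfl fun j _ => by
      rw [intervalIntegral.integral_const_mul, hparts j]
end
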